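/- Let K be a field, A and B algebras over K with A unital, and φ : M₂(A) → B an arbitrary function. Then φ is a K-algebra homomorphism if and only if φ is a semigroup homomorphism (φ(xy) = φ(x)φ(y) for all x, y) whose restriction to the K-linear subspace K·e₁₁ + K·e₂₂ of M₂(A) is K-linear. -/

import Mathlib

/-- If a multiplicative map out of a ring with a "2×2 matrix unit system"
`e, f, u, v` sends `0` to `0` and satisfies `φ (e + f) = φ e + φ f`, then it
is additive. -/
theorem key_additive {R B : Type*} [Ring R] [NonUnitalRing B]
    (φ : R → B) (hmul : ∀ x y, φ (x * y) = φ x * φ y)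
    (e f u v : R)
    (hef1 : e + f = 1)
    (hee : e * e = e) (hff : f * f = f) (hef : e * f = 0) (hfe : f * e = 0)
    (huv : u * v = e) (hvu : v * u = f)
    (heu : e * u = u) (huf : u * f = u) (hfv : f * v = v) (hve : v * e = v)
    (h0 : φ 0 = 0) (hsum : φ (e + f) = φ e + φ f)
    (x y : R) : φ (x + y) = φ x + φ y := by
  have hφ1 : φ 1 = φ e + φ f := by rw [← hef1]; exact hsum
  -- Peirce decomposition of φ
  have hP : ∀ z, φ z = φ (e * (z * e)) + φ (e * (z * f)) +
      (φ (f * (z * e)) + φ (f * (z * f))) := by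
    intro z
    calc φ z = φ 1 * (φ z * φ 1) := by rw [← hmul, ← hmul, one_mul, mul_one]
      _ = (φ e + φ f) * (φ z * (φ e + φ f)) := by rw [hφ1]
      _ = φ (e * (z * e)) + φ (e * (z * f)) +
          (φ (f * (z * e)) + φ (f * (z * f))) := by
        simp only [mul_add, add_mul, ← hmul]
        abel
  -- additivity on the (1,2) Peirce component
  have L12 : ∀ a b, e * a = a → a * f = a → e * b = b → b * f = b →
      φ (a + b) = φ a + φ b := by
    intro a b ha1 ha2 hb1 hb2
    have ha3 : a * e = 0 := by rw [← ha2, mul_assoc, hfe, mul_zero]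
    have hb3 : b * e = 0 := by rw [← hb2, mul_assoc, hfe, mul_zero]
    have ha4 : f * a = 0 := by rw [← ha1, ← mul_assoc, hfe, zero_mul]
    have hb4 : f * b = 0 := by rw [← hb1, ← mul_assoc, hfe, zero_mul]
    have hab : a * b = 0 := by
      rw [← ha2, ← hb1, mul_assoc, ← mul_assoc f e b, hfe, zero_mul, mul_zero]
    have hkey : (e + a) * (b + f) = a + b := by
      rw [add_mul, mul_add, mul_add, hb1, hef, hab, ha2, add_zero, zero_add,
        add_comm]
    have c1 : e * ((e + a) * e) = e := by rw [add_mul, hee, ha3, add_zero, hee]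
    have c2 : e * ((e + a) * f) = a := by rw [add_mul, hef, ha2, zero_add, ha1]
    have c3 : f * ((e + a) * e) = 0 := by rw [add_mul, hee, ha3, add_zero, hfe]
    have c4 : f * ((e + a) * f) = 0 := by rw [add_mul, hef, ha2, zero_add, ha4]
    have h2 : φ (e + a) = φ e + φ a := by
      have hp := hP (e + a)
      rw [c1, c2, c3, c4, h0, add_zero, add_zero] at hp
      exact hp
    have d1 : e * ((b + f) * e) = 0 := by
      rw [add_mul, hb3, hfe, add_zero, mul_zero]
    have d2 : e * ((b + f) * f) = b := by
      rw [add_mul, hb2, hff, mul_add, hb1, hef, add_zero]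
    have d3 : f * ((b + f) * e) = 0 := by
      rw [add_mul, hb3, hfe, add_zero, mul_zero]
    have d4 : f * ((b + f) * f) = f := by
      rw [add_mul, hb2, hff, mul_add, hb4, hff, zero_add]
    have h3 : φ (b + f) = φ b + φ f := by
      have hp := hP (b + f)
      rw [d1, d2, d3, d4, h0, zero_add, zero_add] at hp
      exact hp
    calc φ (a + b) = φ ((e + a) * (b + f)) := by rw [hkey]
      _ = (φ e + φ a) * (φ b + φ f) := by rw [hmul, h2, h3]
      _ = φ a + φ b := by
        rw [add_mul, mul_add, mul_add, ← hmul, ← hmul, ← hmul, ← hmul,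
          hb1, hef, hab, ha2, h0, add_zero, zero_add, add_comm]
  -- additivity on the (2,1) Peirce component
  have L21 : ∀ a b, f * a = a → a * e = a → f * b = b → b * e = b →
      φ (a + b) = φ a + φ b := by
    intro a b ha1 ha2 hb1 hb2
    have ha3 : a * f = 0 := by rw [← ha2, mul_assoc, hef, mul_zero]
    have hb3 : b * f = 0 := by rw [← hb2, mul_assoc, hef, mul_zero]
    have ha4 : e * a = 0 := by rw [← ha1, ← mul_assoc, hef, zero_mul]
    have hb4 : e * b = 0 := by rw [← hb1, ← mul_assoc, hef, zero_mul]
    have hab : a * b = 0 := by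
      rw [← ha2, ← hb1, mul_assoc, ← mul_assoc e f b, hef, zero_mul, mul_zero]
    have hkey : (f + a) * (b + e) = a + b := by
      rw [add_mul, mul_add, mul_add, hb1, hfe, hab, ha2, add_zero, zero_add,
        add_comm]
    have c1 : e * ((f + a) * e) = 0 := by rw [add_mul, hfe, ha2, zero_add, ha4]
    have c2 : e * ((f + a) * f) = 0 := by rw [add_mul, hff, ha3, add_zero, hef]
    have c3 : f * ((f + a) * e) = a := by rw [add_mul, hfe, ha2, zero_add, ha1]
    have c4 : f * ((f + a) * f) = f := by rw [add_mul, hff, ha3, add_zero, hff]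
    have h2 : φ (f + a) = φ a + φ f := by
      have hp := hP (f + a)
      rw [c1, c2, c3, c4, h0, zero_add, zero_add] at hp
      exact hp
    have d1 : e * ((b + e) * e) = e := by
      rw [add_mul, hb2, hee, mul_add, hb4, hee, zero_add]
    have d2 : e * ((b + e) * f) = 0 := by
      rw [add_mul, hb3, hef, add_zero, mul_zero]
    have d3 : f * ((b + e) * e) = b := by
      rw [add_mul, hb2, hee, mul_add, hb1, hfe, add_zero]
    have d4 : f * ((b + e) * f) = 0 := by
      rw [add_mul, hb3, hef, add_zero, mul_zero]
    have h3 : φ (b + e) = φ e + φ b := by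
      have hp := hP (b + e)
      rw [d1, d2, d3, d4, h0, add_zero, add_zero] at hp
      exact hp
    calc φ (a + b) = φ ((f + a) * (b + e)) := by rw [hkey]
      _ = (φ a + φ f) * (φ e + φ b) := by rw [hmul, h2, h3]
      _ = φ a + φ b := by
        rw [add_mul, mul_add, mul_add, ← hmul, ← hmul, ← hmul, ← hmul,
          ha2, hab, hfe, hb1, h0, add_zero, zero_add]
  -- additivity on the (1,1) Peirce component
  have L11 : ∀ a b, e * a = a → a * e = a → e * b = b → b * e = b →
      φ (a + b) = φ a + φ b := by
    intro a b ha1 ha2 hb1 hb2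
    have hau1 : e * (a * u) = a * u := by rw [← mul_assoc, ha1]
    have hau2 : (a * u) * f = a * u := by rw [mul_assoc, huf]
    have hbu1 : e * (b * u) = b * u := by rw [← mul_assoc, hb1]
    have hbu2 : (b * u) * f = b * u := by rw [mul_assoc, huf]
    have h12 := L12 (a * u) (b * u) hau1 hau2 hbu1 hbu2
    have hs1 : φ (a + b) * φ u = (φ a + φ b) * φ u := by
      calc φ (a + b) * φ u = φ ((a + b) * u) := (hmul _ _).symm
        _ = φ (a * u + b * u) := by rw [add_mul]
        _ = φ (a * u) + φ (b * u) := h12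
        _ = φ a * φ u + φ b * φ u := by rw [hmul, hmul]
        _ = (φ a + φ b) * φ u := by rw [add_mul]
    have hse : ∀ z, z * e = z → φ z * φ e = φ z := fun z hz => by
      rw [← hmul, hz]
    have habe : (a + b) * e = a + b := by rw [add_mul, ha2, hb2]
    calc φ (a + b) = φ (a + b) * φ e := (hse _ habe).symm
      _ = φ (a + b) * (φ u * φ v) := by rw [← huv, hmul]
      _ = (φ (a + b) * φ u) * φ v := by rw [mul_assoc]
      _ = ((φ a + φ b) * φ u) * φ v := by rw [hs1]
      _ = (φ a + φ b) * (φ u * φ v) := by rw [mul_assoc]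
      _ = (φ a + φ b) * φ e := by rw [← hmul, huv]
      _ = φ a + φ b := by rw [add_mul, hse _ ha2, hse _ hb2]
  -- additivity on the (2,2) Peirce component
  have L22 : ∀ a b, f * a = a → a * f = a → f * b = b → b * f = b →
      φ (a + b) = φ a + φ b := by
    intro a b ha1 ha2 hb1 hb2
    have hav1 : f * (a * v) = a * v := by rw [← mul_assoc, ha1]
    have hav2 : (a * v) * e = a * v := by rw [mul_assoc, hve]
    have hbv1 : f * (b * v) = b * v := by rw [← mul_assoc, hb1]
    have hbv2 : (b * v) * e = b * v := by rw [mul_assoc, hve]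
    have h21 := L21 (a * v) (b * v) hav1 hav2 hbv1 hbv2
    have hs1 : φ (a + b) * φ v = (φ a + φ b) * φ v := by
      calc φ (a + b) * φ v = φ ((a + b) * v) := (hmul _ _).symm
        _ = φ (a * v + b * v) := by rw [add_mul]
        _ = φ (a * v) + φ (b * v) := h21
        _ = φ a * φ v + φ b * φ v := by rw [hmul, hmul]
        _ = (φ a + φ b) * φ v := by rw [add_mul]
    have hsf : ∀ z, z * f = z → φ z * φ f = φ z := fun z hz => by
      rw [← hmul, hz]
    have habf : (a + b) * f = a + b := by rw [add_mul, ha2, hb2]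
    calc φ (a + b) = φ (a + b) * φ f := (hsf _ habf).symm
      _ = φ (a + b) * (φ v * φ u) := by rw [← hvu, hmul]
      _ = (φ (a + b) * φ v) * φ u := by rw [mul_assoc]
      _ = ((φ a + φ b) * φ v) * φ u := by rw [hs1]
      _ = (φ a + φ b) * (φ v * φ u) := by rw [mul_assoc]
      _ = (φ a + φ b) * φ f := by rw [← hmul, hvu]
      _ = φ a + φ b := by rw [add_mul, hsf _ ha2, hsf _ hb2]
  -- assemble
  have p11x1 : e * (e * (x * e)) = e * (x * e) := by rw [← mul_assoc, hee]
  have p11x2 : (e * (x * e)) * e = e * (x * e) := by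
    rw [mul_assoc, mul_assoc, hee]
  have p11y1 : e * (e * (y * e)) = e * (y * e) := by rw [← mul_assoc, hee]
  have p11y2 : (e * (y * e)) * e = e * (y * e) := by
    rw [mul_assoc, mul_assoc, hee]
  have p12x1 : e * (e * (x * f)) = e * (x * f) := by rw [← mul_assoc, hee]
  have p12x2 : (e * (x * f)) * f = e * (x * f) := by
    rw [mul_assoc, mul_assoc, hff]
  have p12y1 : e * (e * (y * f)) = e * (y * f) := by rw [← mul_assoc, hee]
  have p12y2 : (e * (y * f)) * f = e * (y * f) := by
    rw [mul_assoc, mul_assoc, hff]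
  have p21x1 : f * (f * (x * e)) = f * (x * e) := by rw [← mul_assoc, hff]
  have p21x2 : (f * (x * e)) * e = f * (x * e) := by
    rw [mul_assoc, mul_assoc, hee]
  have p21y1 : f * (f * (y * e)) = f * (y * e) := by rw [← mul_assoc, hff]
  have p21y2 : (f * (y * e)) * e = f * (y * e) := by
    rw [mul_assoc, mul_assoc, hee]
  have p22x1 : f * (f * (x * f)) = f * (x * f) := by rw [← mul_assoc, hff]
  have p22x2 : (f * (x * f)) * f = f * (x * f) := by
    rw [mul_assoc, mul_assoc, hff]
  have p22y1 : f * (f * (y * f)) = f * (y * f) := by rw [← mul_assoc, hff]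
  have p22y2 : (f * (y * f)) * f = f * (y * f) := by
    rw [mul_assoc, mul_assoc, hff]
  have hx := hP (x + y)
  have e1 : e * ((x + y) * e) = e * (x * e) + e * (y * e) := by
    rw [add_mul, mul_add]
  have e2 : e * ((x + y) * f) = e * (x * f) + e * (y * f) := by
    rw [add_mul, mul_add]
  have e3 : f * ((x + y) * e) = f * (x * e) + f * (y * e) := by
    rw [add_mul, mul_add]
  have e4 : f * ((x + y) * f) = f * (x * f) + f * (y * f) := by
    rw [add_mul, mul_add]
  rw [e1, e2, e3, e4,
    L11 _ _ p11x1 p11x2 p11y1 p11y2,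
    L12 _ _ p12x1 p12x2 p12y1 p12y2,
    L21 _ _ p21x1 p21x2 p21y1 p21y2,
    L22 _ _ p22x1 p22x2 p22y1 p22y2] at hx
  rw [hx, hP x, hP y]
  abel

/-- Let `K` be a field, `A` and `B` algebras over `K` with
`A` unital, and `φ : M₂(A) → B` an arbitrary function.  Then `φ` is a
`K`-algebra homomorphism (additive, multiplicative and `K`-homogeneous) if
and only if `φ` is a semigroup homomorphism whose restriction to the
subspace `K·e₁₁ + K·e₂₂` of `M₂(A)` is `K`-linear. -/
theorem stmt_2 {K A B : Type*} [Field K] [Ring A] [Algebra K A]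
    [NonUnitalRing B] [Module K B] [SMulCommClass K B B] [IsScalarTower K B B]
    (φ : Matrix (Fin 2) (Fin 2) A → B) :
    ((∀ x y, φ (x + y) = φ x + φ y) ∧ (∀ x y, φ (x * y) = φ x * φ y) ∧
        (∀ (c : K) (x), φ (c • x) = c • φ x)) ↔
      ((∀ x y, φ (x * y) = φ x * φ y) ∧
        (∀ lam mu lam' mu' : K,
          φ ((lam • Matrix.single 0 0 (1 : A) +
                mu • Matrix.single 1 1 (1 : A)) +
              (lam' • Matrix.single 0 0 (1 : A) +
                mu' • Matrix.single 1 1 (1 : A))) =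
            φ (lam • Matrix.single 0 0 (1 : A) +
                mu • Matrix.single 1 1 (1 : A)) +
            φ (lam' • Matrix.single 0 0 (1 : A) +
                mu' • Matrix.single 1 1 (1 : A))) ∧
        (∀ c lam mu : K,
          φ (c • (lam • Matrix.single 0 0 (1 : A) +
                mu • Matrix.single 1 1 (1 : A))) =
            c • φ (lam • Matrix.single 0 0 (1 : A) +
                mu • Matrix.single 1 1 (1 : A)))) := by
  constructor
  · rintro ⟨hadd, hmul, hsmul⟩
    exact ⟨hmul, fun lam mu lam' mu' => hadd _ _, fun c lam mu => hsmul _ _⟩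
  · rintro ⟨hmul, hadd', hsmul'⟩
    set e : Matrix (Fin 2) (Fin 2) A := Matrix.single 0 0 (1 : A)
      with he
    set f : Matrix (Fin 2) (Fin 2) A := Matrix.single 1 1 (1 : A)
      with hf
    set u : Matrix (Fin 2) (Fin 2) A := Matrix.single 0 1 (1 : A)
      with hu
    set v : Matrix (Fin 2) (Fin 2) A := Matrix.single 1 0 (1 : A)
      with hv
    have hef1 : e + f = 1 := by
      ext i j
      fin_cases i <;> fin_cases j <;>
        simp [he, hf, Matrix.single, Matrix.one_apply]
    have hee : e * e = e := by
      rw [he, Matrix.single_mul_single_same, one_mul]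
    have hff : f * f = f := by
      rw [hf, Matrix.single_mul_single_same, one_mul]
    have hef : e * f = 0 := by
      rw [he, hf]
      exact Matrix.single_mul_single_of_ne _ _ _ _ (by decide : (0:Fin 2) ≠ 1) 1
    have hfe : f * e = 0 := by
      rw [he, hf]
      exact Matrix.single_mul_single_of_ne _ _ _ _ (by decide : (1:Fin 2) ≠ 0) 1
    have huv : u * v = e := by
      rw [he, hu, hv, Matrix.single_mul_single_same, one_mul]
    have hvu : v * u = f := by
      rw [hf, hu, hv, Matrix.single_mul_single_same, one_mul]
    have heu : e * u = u := by
      rw [he, hu, Matrix.single_mul_single_same, one_mul]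
    have huf : u * f = u := by
      rw [hf, hu, Matrix.single_mul_single_same, one_mul]
    have hfv : f * v = v := by
      rw [hf, hv, Matrix.single_mul_single_same, one_mul]
    have hve : v * e = v := by
      rw [he, hv, Matrix.single_mul_single_same, one_mul]
    have h0 : φ 0 = 0 := by simpa using hsmul' 0 1 1
    have hsum : φ (e + f) = φ e + φ f := by simpa using hadd' 1 0 0 1
    have hc1 : ∀ c : K, φ (c • (1 : Matrix (Fin 2) (Fin 2) A)) = c • φ 1 := by
      intro c
      have h := hsmul' c 1 1
      simpa [hef1] using h
    refine ⟨fun x y => key_additive φ hmul e f u v hef1 hee hff hef hfe huv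
      hvu heu huf hfv hve h0 hsum x y, hmul, ?_⟩
    intro c x
    have h1x : φ 1 * φ x = φ x := by rw [← hmul, one_mul]
    calc φ (c • x) = φ ((c • 1) * x) := by rw [smul_mul_assoc, one_mul]
      _ = φ (c • 1) * φ x := hmul _ _
      _ = (c • φ 1) * φ x := by rw [hc1]
      _ = c • (φ 1 * φ x) := by rw [smul_mul_assoc]
      _ = c • φ x := by rw [h1x]
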